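/- Suppose v : ℝ × ℝⁿ × ℝᵐ → ℝ is continuously differentiable and satisfies the dissipation constraints: (i) for every (t, ζ, k) ∈ [0,T] × Z × K and every δ ∈ [−1,1]ⁿ one has ∂ₜv(t, ζ, k) + ⟨∇_ζ v(t, ζ, k), f(t, ζ, k) + g(t, ζ, k) ∘ δ⟩ ≤ 0, and (ii) v(0, ζ, k) ≤ 0 for all (ζ, k) ∈ Z₀ × K. Suppose further that w : ℝ² × ℝᵐ → ℝ satisfies w(π(ζ), k) + v(t, ζ, k) − 1 ≥ 0 for all (t, ζ, k) ∈ [0,T] × Z × K. Then the forward reachable set X_FRS is contained in the 1-superlevel set of w, i.e., every (x, k) ∈ X_FRS satisfies w(x, k) ≥ 1. -/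

import Mathlib

open Set MeasureTheory intervalIntegral
open Topology

/-- `f(t,ζ,k) + g(t,ζ,k) ∘ δ`, where `∘` is the componentwise (Hadamard) product. -/
def hadSum {n m : ℕ} (f g : ℝ × (Fin n → ℝ) × (Fin m → ℝ) → (Fin n → ℝ))
    (t : ℝ) (ζ : Fin n → ℝ) (k : Fin m → ℝ) (δ : Fin n → ℝ) : Fin n → ℝ :=
  fun i => f (t, ζ, k) i + g (t, ζ, k) i * δ i

/-- An admissible trajectory of the trajectory-tracking system for the parameter `k`. -/
def IsAdmissible {n m : ℕ} (T : ℝ) (Z Z₀ : Set (Fin n → ℝ))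
    (f g : ℝ × (Fin n → ℝ) × (Fin m → ℝ) → (Fin n → ℝ))
    (k : Fin m → ℝ) (ζ : ℝ → (Fin n → ℝ)) : Prop :=
  (∀ t ∈ Icc (0:ℝ) T, ζ t ∈ Z) ∧ ζ 0 ∈ Z₀ ∧
  ∃ d : ℝ → (Fin n → ℝ), Measurable d ∧ (∀ t i, d t i ∈ Icc (-1:ℝ) 1) ∧
    (∀ i, IntervalIntegrable (fun τ => hadSum f g τ (ζ τ) k (d τ) i) volume 0 T) ∧
    (∀ t ∈ Icc (0:ℝ) T, ∀ i, ζ t i = ζ 0 i + ∫ τ in (0:ℝ)..t, hadSum f g τ (ζ τ) k (d τ) i)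

set_option maxHeartbeats 1000000 in
/-- Suppose `v` satisfies the dissipation constraints and `w(π(ζ),k) + v(t,ζ,k) - 1 ≥ 0`
on `[0,T] × Z × K`, where `π` projects onto the first two (spatial) coordinates.  Then the
forward reachable set is contained in the `1`-superlevel set of `w`: for every `k ∈ K`,
every admissible trajectory `ζ`, and every `τ ∈ [0,T]`, we have `w(π(ζ(τ)), k) ≥ 1`.
The state dimension is `n + 2` (encoding `n ≥ 2`). -/
theorem frs_subset_superlevel_w {n m : ℕ} {T : ℝ} (hT : 0 < T)
    (Z Z₀ : Set (Fin (n + 2) → ℝ)) (K : Set (Fin m → ℝ)) (hZ₀ : Z₀ ⊆ Z)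
    (f g : ℝ × (Fin (n + 2) → ℝ) × (Fin m → ℝ) → (Fin (n + 2) → ℝ))
    (hf : Continuous f) (hg : Continuous g)
    (v : ℝ × (Fin (n + 2) → ℝ) × (Fin m → ℝ) → ℝ) (hv : ContDiff ℝ 1 v)
    (hdiss : ∀ t ∈ Icc (0:ℝ) T, ∀ ζ ∈ Z, ∀ k ∈ K, ∀ δ : Fin (n + 2) → ℝ,
      (∀ i, δ i ∈ Icc (-1:ℝ) 1) →
      fderiv ℝ v (t, ζ, k) (1, hadSum f g t ζ k δ, 0) ≤ 0)
    (hinit : ∀ ζ₀ ∈ Z₀, ∀ k ∈ K, v (0, ζ₀, k) ≤ 0)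
    (w : (ℝ × ℝ) × (Fin m → ℝ) → ℝ)
    (hw : ∀ t ∈ Icc (0:ℝ) T, ∀ ζ ∈ Z, ∀ k ∈ K,
      0 ≤ w ((ζ 0, ζ 1), k) + v (t, ζ, k) - 1) :
    ∀ k ∈ K, ∀ ζ : ℝ → (Fin (n + 2) → ℝ), IsAdmissible T Z Z₀ f g k ζ →
      ∀ τ ∈ Icc (0:ℝ) T, 1 ≤ w ((ζ τ 0, ζ τ 1), k) := by
  intro k hk ζ hζadm
  obtain ⟨hZmem, hζ0, d, hdmeas, hdmem, hFint, hζeq⟩ := hζadm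
  set F : ℝ → Fin (n + 2) → ℝ := fun s => hadSum f g s (ζ s) k (d s) with hFdef
  -- continuity of ζ on [0, T]
  have hζcont : ContinuousOn ζ (Icc 0 T) := by
    rw [continuousOn_pi]
    intro i
    have h2 := intervalIntegral.continuousOn_primitive_interval'
      (hFint i) (left_mem_uIcc (a := (0:ℝ)) (b := T))
    rw [uIcc_of_le hT.le] at h2
    exact (continuousOn_const.add h2).congr fun x hx => hζeq x hx i
  have htraj : ContinuousOn (fun s => (s, ζ s, k)) (Icc 0 T) :=
    continuousOn_id.prodMk (hζcont.prodMk continuousOn_const)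
  have hcf : ContinuousOn (fun s => f (s, ζ s, k)) (Icc 0 T) := hf.comp_continuousOn htraj
  have hcg : ContinuousOn (fun s => g (s, ζ s, k)) (Icc 0 T) := hg.comp_continuousOn htraj
  obtain ⟨Cf, hCf⟩ := isCompact_Icc.exists_bound_of_continuousOn hcf
  obtain ⟨Cg, hCg⟩ := isCompact_Icc.exists_bound_of_continuousOn hcg
  set M : ℝ := max 1 (Cf + Cg) with hMdef
  have hM1 : (1:ℝ) ≤ M := le_max_left _ _
  have hM0 : (0:ℝ) < M := lt_of_lt_of_le one_pos hM1
  have hfgM : ∀ s ∈ Icc (0:ℝ) T, ‖f (s, ζ s, k)‖ + ‖g (s, ζ s, k)‖ ≤ M := by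
    intro s hs
    have hf2 := hCf s hs
    have hg2 := hCg s hs
    calc ‖f (s, ζ s, k)‖ + ‖g (s, ζ s, k)‖ ≤ Cf + Cg := by linarith
    _ ≤ M := le_max_right _ _
  have hFabs : ∀ s ∈ Icc (0:ℝ) T, ∀ i, ‖F s i‖ ≤ M := by
    intro s hs i
    have h1 : ‖f (s, ζ s, k) i‖ ≤ ‖f (s, ζ s, k)‖ := norm_le_pi_norm _ i
    have h2 : ‖g (s, ζ s, k) i‖ ≤ ‖g (s, ζ s, k)‖ := norm_le_pi_norm _ i
    have h3 : ‖d s i‖ ≤ 1 := by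
      rw [Real.norm_eq_abs]; exact abs_le.2 ⟨(hdmem s i).1, (hdmem s i).2⟩
    have h4 := hfgM s hs
    have h5 : ‖F s i‖ ≤ ‖f (s, ζ s, k) i‖ + ‖g (s, ζ s, k) i‖ * ‖d s i‖ := by
      rw [hFdef]
      simp only [hadSum]
      exact (norm_add_le _ _).trans (by rw [norm_mul])
    nlinarith [norm_nonneg (g (s, ζ s, k) i), norm_nonneg (d s i)]
  have hFii : ∀ (i : Fin (n + 2)) (t z : ℝ), 0 ≤ t → t ≤ z → z ≤ T →
      IntervalIntegrable (fun τ => F τ i) volume t z := by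
    intro i t z h0 h1 h2
    exact (hFint i).mono_set (by rw [uIcc_of_le hT.le, uIcc_of_le h1]; exact Icc_subset_Icc h0 h2)
  have hincr : ∀ t z : ℝ, 0 ≤ t → t ≤ z → z ≤ T → ∀ i,
      ζ z i - ζ t i = ∫ τ in t..z, F τ i := by
    intro t z h0 h1 h2 i
    have ha := hζeq t ⟨h0, le_trans h1 h2⟩ i
    have hb := hζeq z ⟨le_trans h0 h1, h2⟩ i
    have hadd := intervalIntegral.integral_add_adjacent_intervals
      (hFii i 0 t le_rfl h0 (le_trans h1 h2)) (hFii i t z h0 h1 h2)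
    rw [ha, hb]
    linarith [hadd]
  have hlip : ∀ t z : ℝ, 0 ≤ t → t ≤ z → z ≤ T → ‖ζ z - ζ t‖ ≤ M * (z - t) := by
    intro t z h0 h1 h2
    rw [pi_norm_le_iff_of_nonneg (mul_nonneg hM0.le (by linarith))]
    intro i
    rw [Pi.sub_apply, hincr t z h0 h1 h2 i]
    have hb : ∀ x ∈ Set.uIoc t z, ‖F x i‖ ≤ M := by
      intro x hx
      rw [uIoc_of_le h1] at hx
      exact hFabs x ⟨le_trans h0 hx.1.le, le_trans hx.2 h2⟩ i
    calc ‖∫ τ in t..z, F τ i‖ ≤ M * |z - t| :=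
      intervalIntegral.norm_integral_le_of_norm_le_const hb
    _ = M * (z - t) := by rw [abs_of_nonneg (by linarith)]
  have hhcont : ContinuousOn (fun s => v (s, ζ s, k)) (Icc 0 T) :=
    hv.continuous.comp_continuousOn htraj
  have key : ∀ τ ∈ Icc (0:ℝ) T, v (τ, ζ τ, k) ≤ v (0, ζ 0, k) := by
    intro τ hτ
    refine image_le_of_liminf_slope_right_le_deriv_boundary (B := fun _ => v (0, ζ 0, k))
      (B' := fun _ => 0) hhcont le_rfl continuousOn_const
      (fun x _ => hasDerivWithinAt_const x _ _) ?_ hτ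
    intro t ht r hr
    have hr0 : (0:ℝ) < r := hr
    have htIcc : t ∈ Icc (0:ℝ) T := ⟨ht.1, ht.2.le⟩
    set L := fderiv ℝ v (t, ζ t, k) with hLdef
    set c₀ : ℝ := L (1, 0, 0) with hc0
    set c : Fin (n + 2) → ℝ := fun i => L (0, Pi.single i 1, 0) with hc
    have Lval : ∀ (a : ℝ) (y : Fin (n + 2) → ℝ),
        L (a, y, (0 : Fin m → ℝ)) = a * c₀ + ∑ i, y i * c i := by
      intro a y
      have h1 : (a, y, (0 : Fin m → ℝ)) = a • ((1:ℝ), (0 : Fin (n+2) → ℝ), (0 : Fin m → ℝ))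
          + ((0:ℝ), y, (0 : Fin m → ℝ)) := by
        simp [Prod.ext_iff]
      rw [h1, map_add, _root_.map_smul, smul_eq_mul]
      congr 1
      set A : (Fin (n+2) → ℝ) →L[ℝ] ℝ :=
        L.comp ((ContinuousLinearMap.inr ℝ ℝ ((Fin (n+2) → ℝ) × (Fin m → ℝ))).comp
          (ContinuousLinearMap.inl ℝ (Fin (n+2) → ℝ) (Fin m → ℝ))) with hA
      have h2 : ∀ z : Fin (n+2) → ℝ, L ((0:ℝ), z, (0 : Fin m → ℝ)) = A z := fun z => rfl
      rw [h2]
      have h3 : y = ∑ i, y i • (Pi.single i 1 : Fin (n+2) → ℝ) := by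
        funext j
        simp [Pi.single_apply, Finset.sum_ite_eq', mul_comm]
      conv_lhs => rw [h3]
      rw [map_sum]
      exact Finset.sum_congr rfl fun i _ => by rw [_root_.map_smul, smul_eq_mul]; rfl
    have hder : HasFDerivAt v L (t, ζ t, k) := (hv.differentiable one_ne_zero (t, ζ t, k)).hasFDerivAt
    have hev := hder.isLittleO.def (show (0:ℝ) < r / (4 * M) by positivity)
    rw [Metric.eventually_nhds_iff] at hev
    obtain ⟨δ₁, hδ₁, hball⟩ := hev
    set ε₂ : ℝ := r / (4 * (‖L‖ + 1)) with hε₂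
    have hε₂0 : 0 < ε₂ := by positivity
    have hft := hcf t htIcc
    rw [Metric.continuousWithinAt_iff] at hft
    obtain ⟨δf, hδf, hfb⟩ := hft ε₂ hε₂0
    have hgt := hcg t htIcc
    rw [Metric.continuousWithinAt_iff] at hgt
    obtain ⟨δg, hδg, hgb⟩ := hgt ε₂ hε₂0
    have hTt : 0 < T - t := sub_pos.2 ht.2
    set δ' : ℝ := min (min (δ₁ / M) (T - t)) (min δf δg) with hδ'
    have hδ'0 : 0 < δ' := lt_min (lt_min (by positivity) hTt) (lt_min hδf hδg)
    have hmem : Ioo t (t + δ') ∈ 𝓝[>] t := Ioo_mem_nhdsGT (by linarith)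
    refine Filter.Eventually.frequently (Filter.eventually_of_mem hmem fun z hz => ?_)
    obtain ⟨hz1, hz2⟩ := hz
    have hzT : z ≤ T := by
      have h5 : δ' ≤ T - t := le_trans (min_le_left _ _) (min_le_right _ _)
      linarith
    have hzt0 : 0 < z - t := sub_pos.2 hz1
    have hztδ1 : M * (z - t) < δ₁ := by
      have h5 : δ' ≤ δ₁ / M := le_trans (min_le_left _ _) (min_le_left _ _)
      have h6 : z - t < δ₁ / M := by linarith
      calc M * (z - t) < M * (δ₁ / M) := by exact mul_lt_mul_of_pos_left h6 hM0
      _ = δ₁ := by field_simp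
    have hΔζ : ‖ζ z - ζ t‖ ≤ M * (z - t) := hlip t z ht.1 hz1.le hzT
    have hdist : dist ((z : ℝ), ζ z, k) (t, ζ t, k) ≤ M * (z - t) := by
      rw [Prod.dist_eq, Prod.dist_eq]
      refine max_le ?_ (max_le ?_ ?_)
      · rw [Real.dist_eq, abs_of_nonneg hzt0.le]; nlinarith
      · rw [dist_eq_norm]; exact hΔζ
      · rw [dist_self]; positivity
    have hle := hball (lt_of_le_of_lt hdist hztδ1)
    have hsub : ((z : ℝ), ζ z, k) - (t, ζ t, k) = ((z - t : ℝ), ζ z - ζ t, (0 : Fin m → ℝ)) := by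
      simp [Prod.ext_iff]
    rw [hsub] at hle
    have hnq : ‖((z - t : ℝ), ζ z - ζ t, (0 : Fin m → ℝ))‖ ≤ M * (z - t) := by
      rw [← hsub, ← dist_eq_norm]
      exact hdist
    have hA : v (z, ζ z, k) - v (t, ζ t, k)
        ≤ L ((z - t : ℝ), ζ z - ζ t, (0 : Fin m → ℝ)) + r / 4 * (z - t) := by
      have h7 : r / (4 * M) * ‖((z - t : ℝ), ζ z - ζ t, (0 : Fin m → ℝ))‖
          ≤ r / 4 * (z - t) := by
        have h8 := mul_le_mul_of_nonneg_left hnq (le_of_lt (show (0:ℝ) < r / (4 * M) by positivity))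
        have h9 : r / (4 * M) * (M * (z - t)) = r / 4 * (z - t) := by
          field_simp
        linarith
      have h10 := le_trans (le_abs_self _) (by rwa [Real.norm_eq_abs] at hle)
      linarith
    have hintF : ∀ i, IntervalIntegrable (fun s => F s i) volume t z :=
      fun i => hFii i t z ht.1 hz1.le hzT
    have hψint : ∀ i ∈ Finset.univ, IntervalIntegrable (fun s => F s i * c i) volume t z :=
      fun i _ => (hintF i).mul_const _
    have hsumInt : ∀ u : Fin (n + 2) → ℝ → ℝ,
        (∀ i ∈ Finset.univ, IntervalIntegrable (u i) volume t z) →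
        IntervalIntegrable (fun s => ∑ i, u i s) volume t z := by
      intro u hu
      have h := IntervalIntegrable.sum Finset.univ hu
      have he : (∑ i : Fin (n + 2), u i) = fun s => ∑ i, u i s := by
        funext s; simp
      rwa [he] at h
    have hψval : (∫ s in t..z, (c₀ + ∑ i, F s i * c i))
        = L ((z - t : ℝ), ζ z - ζ t, (0 : Fin m → ℝ)) := by
      rw [intervalIntegral.integral_add intervalIntegrable_const (hsumInt _ hψint)]
      rw [intervalIntegral.integral_finset_sum hψint]
      simp only [intervalIntegral.integral_mul_const, intervalIntegral.integral_const,
        smul_eq_mul]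
      rw [Lval]
      congr 1
      refine Finset.sum_congr rfl fun i _ => ?_
      rw [Pi.sub_apply, hincr t z ht.1 hz1.le hzT i]
    have hχle : ∀ s : ℝ, c₀ + ∑ i, hadSum f g t (ζ t) k (d s) i * c i ≤ 0 := by
      intro s
      have h8 := hdiss t htIcc (ζ t) (hZmem t htIcc) k hk (d s) (fun i => hdmem s i)
      rw [← hLdef, Lval 1 (hadSum f g t (ζ t) k (d s)), one_mul] at h8
      exact h8
    have hχint : IntervalIntegrable
        (fun s => c₀ + ∑ i, hadSum f g t (ζ t) k (d s) i * c i) volume t z := by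
      refine intervalIntegrable_const.add (hsumInt _ fun i _ => ?_)
      have hdi : IntervalIntegrable (fun s => d s i) volume t z := by
        rw [intervalIntegrable_iff]
        refine Integrable.mono' (g := fun _ => (1:ℝ)) ?_ ?_ ?_
        · exact integrableOn_const (by rw [uIoc_of_le hz1.le]; exact measure_Ioc_lt_top.ne)
        · exact ((measurable_pi_apply i).comp hdmeas).aestronglyMeasurable
        · exact ae_of_all _ fun s => by
            rw [Real.norm_eq_abs]; exact abs_le.2 ⟨(hdmem s i).1, (hdmem s i).2⟩
      simp only [hadSum]
      exact (intervalIntegrable_const.add (hdi.const_mul _)).mul_const _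
    have hcompare : ∀ s ∈ Icc t z, c₀ + ∑ i, F s i * c i
        ≤ (c₀ + ∑ i, hadSum f g t (ζ t) k (d s) i * c i) + r / 2 := by
      intro s hs
      have hsIcc : s ∈ Icc (0:ℝ) T := ⟨le_trans ht.1 hs.1, le_trans hs.2 hzT⟩
      have hsd : dist s t < min δf δg := by
        rw [Real.dist_eq, abs_of_nonneg (by linarith [hs.1])]
        have h11 : δ' ≤ min δf δg := min_le_right _ _
        have := hs.2
        linarith
      have hΔf := hfb hsIcc (lt_of_lt_of_le hsd (min_le_left _ _))
      have hΔg := hgb hsIcc (lt_of_lt_of_le hsd (min_le_right _ _))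
      have hLv1 : c₀ + ∑ i, F s i * c i = L (1, F s, (0 : Fin m → ℝ)) := by
        rw [Lval, one_mul]
      have hLv2 : c₀ + ∑ i, hadSum f g t (ζ t) k (d s) i * c i
          = L (1, hadSum f g t (ζ t) k (d s), (0 : Fin m → ℝ)) := by
        rw [Lval, one_mul]
      rw [hLv1, hLv2]
      have hdiff : L (1, F s, (0 : Fin m → ℝ)) - L (1, hadSum f g t (ζ t) k (d s), (0 : Fin m → ℝ))
          = L (0, F s - hadSum f g t (ζ t) k (d s), (0 : Fin m → ℝ)) := by
        rw [← map_sub]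
        congr 1
        simp [Prod.ext_iff]
      have hnorm0 : ‖((0:ℝ), F s - hadSum f g t (ζ t) k (d s), (0 : Fin m → ℝ))‖
          = ‖F s - hadSum f g t (ζ t) k (d s)‖ := by
        simp only [Prod.norm_def, norm_zero]
        rw [max_eq_left (norm_nonneg _), max_eq_right (norm_nonneg _)]
      have hdbound : ‖F s - hadSum f g t (ζ t) k (d s)‖ ≤ ε₂ + ε₂ := by
        rw [pi_norm_le_iff_of_nonneg (by positivity)]
        intro i
        have e1 : (F s - hadSum f g t (ζ t) k (d s)) i
            = (f (s, ζ s, k) i - f (t, ζ t, k) i)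
              + (g (s, ζ s, k) i - g (t, ζ t, k) i) * d s i := by
          simp only [Pi.sub_apply, hFdef, hadSum]
          ring
        rw [e1]
        have b1 : ‖f (s, ζ s, k) i - f (t, ζ t, k) i‖ ≤ ε₂ := by
          have h12 := norm_le_pi_norm (f (s, ζ s, k) - f (t, ζ t, k)) i
          rw [Pi.sub_apply] at h12
          rw [dist_eq_norm] at hΔf
          exact h12.trans hΔf.le
        have b2 : ‖g (s, ζ s, k) i - g (t, ζ t, k) i‖ ≤ ε₂ := by
          have h12 := norm_le_pi_norm (g (s, ζ s, k) - g (t, ζ t, k)) i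
          rw [Pi.sub_apply] at h12
          rw [dist_eq_norm] at hΔg
          exact h12.trans hΔg.le
        have hd1 : ‖d s i‖ ≤ 1 := by
          rw [Real.norm_eq_abs]; exact abs_le.2 ⟨(hdmem s i).1, (hdmem s i).2⟩
        have h13 : ‖(f (s, ζ s, k) i - f (t, ζ t, k) i)
            + (g (s, ζ s, k) i - g (t, ζ t, k) i) * d s i‖
            ≤ ‖f (s, ζ s, k) i - f (t, ζ t, k) i‖
              + ‖g (s, ζ s, k) i - g (t, ζ t, k) i‖ * ‖d s i‖ :=
          (norm_add_le _ _).trans (by rw [norm_mul])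
        nlinarith [norm_nonneg (g (s, ζ s, k) i - g (t, ζ t, k) i), norm_nonneg (d s i)]
      have hLop := L.le_opNorm ((0:ℝ), F s - hadSum f g t (ζ t) k (d s), (0 : Fin m → ℝ))
      rw [hnorm0] at hLop
      have h2ε : ‖L‖ * (ε₂ + ε₂) ≤ r / 2 := by
        have hL0 : (0:ℝ) ≤ ‖L‖ := norm_nonneg _
        have h9 : ‖L‖ * (ε₂ + ε₂) = r * ‖L‖ / (2 * (‖L‖ + 1)) := by
          rw [hε₂]; field_simp; ring
        rw [h9, div_le_div_iff₀ (by positivity) (by norm_num : (0:ℝ) < 2)]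
        nlinarith [hr0, hL0]
      have hfinal : L (1, F s, (0 : Fin m → ℝ))
          - L (1, hadSum f g t (ζ t) k (d s), (0 : Fin m → ℝ)) ≤ r / 2 := by
        rw [hdiff]
        have h14 := le_trans (Real.le_norm_self _) hLop
        have hm := mul_le_mul_of_nonneg_left hdbound (norm_nonneg L)
        linarith
      linarith
    have hmono := intervalIntegral.integral_mono_on hz1.le
      (intervalIntegrable_const.add (hsumInt _ hψint))
      (hχint.add intervalIntegrable_const) hcompare
    have hχbound : (∫ s in t..z, ((c₀ + ∑ i, hadSum f g t (ζ t) k (d s) i * c i) + r / 2))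
        ≤ r / 2 * (z - t) := by
      rw [intervalIntegral.integral_add hχint intervalIntegrable_const,
        intervalIntegral.integral_const, smul_eq_mul]
      have h13 := intervalIntegral.integral_mono_on hz1.le hχint intervalIntegrable_const
        (fun s _ => hχle s)
      simp only [intervalIntegral.integral_const, smul_eq_mul, mul_zero] at h13
      linarith
    have hLbound : L ((z - t : ℝ), ζ z - ζ t, (0 : Fin m → ℝ)) ≤ r / 2 * (z - t) := by
      rw [← hψval]; exact le_trans hmono hχbound
    rw [slope_def_field, div_lt_iff₀ hzt0]
    show v (z, ζ z, k) - v (t, ζ t, k) < r * (z - t)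
    nlinarith [hA, hLbound, hr0, hzt0]
  intro τ hτ
  have h1 : v (τ, ζ τ, k) ≤ 0 := le_trans (key τ hτ) (hinit (ζ 0) hζ0 k hk)
  have h2 := hw τ hτ (ζ τ) (hZmem τ hτ) k hk
  linarith
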